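/- Let m ≥ 1 and k ≥ 1. The number of strictly increasing chains A_1 ⊊ A_2 ⊊ ⋯ ⊊ A_k of subsets of an m-element set with A_1 ≠ ∅ and A_k not equal to the whole set equals Surj(m, k+1), the number of surjections from an m-element set onto a (k+1)-element set. -/

import Mathlib

/-- The number of surjective functions from an `m`-element set onto a `k`-element set. -/
noncomputable def Surj (m k : ℕ) : ℕ := Nat.card {f : Fin m → Fin k // Function.Surjective f}

private lemma card_fin_lt {k : ℕ} (c : ℕ) (hc : c ≤ k) :
    (Finset.univ.filter (fun i : Fin k => (i : ℕ) < c)).card = c := by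
  have himg : (Finset.univ.filter (fun i : Fin k => (i : ℕ) < c)).image Fin.val
      = Finset.range c := by
    ext n
    simp only [Finset.mem_image, Finset.mem_filter, Finset.mem_univ, true_and, Finset.mem_range]
    constructor
    · rintro ⟨i, hi, rfl⟩; exact hi
    · intro hn; exact ⟨⟨n, lt_of_lt_of_le hn hc⟩, hn, rfl⟩
  have h2 := Finset.card_image_of_injective
    (Finset.univ.filter (fun i : Fin k => (i : ℕ) < c)) Fin.val_injective
  rw [himg, Finset.card_range] at h2
  omega

section
variable {m k : ℕ}

private def cnt (A : Fin k → Finset (Fin m)) (x : Fin m) : ℕ :=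
  (Finset.univ.filter (fun i => x ∉ A i)).card

private lemma cnt_le_k (A : Fin k → Finset (Fin m)) (x : Fin m) : cnt A x ≤ k := by
  have := Finset.card_filter_le (Finset.univ : Finset (Fin k)) (fun i => x ∉ A i)
  simpa [cnt] using this

private lemma cnt_le {A : Fin k → Finset (Fin m)} (hA : Monotone A) {x : Fin m} {i : Fin k}
    (hx : x ∈ A i) : cnt A x ≤ (i : ℕ) := by
  have hsub : (Finset.univ.filter (fun j => x ∉ A j))
      ⊆ Finset.univ.filter (fun j : Fin k => (j : ℕ) < (i : ℕ)) := by
    intro j hj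
    simp only [Finset.mem_filter, Finset.mem_univ, true_and] at hj ⊢
    by_contra h
    push_neg at h
    exact hj (hA (Fin.le_def.mpr h) hx)
  calc cnt A x ≤ _ := Finset.card_le_card hsub
    _ = (i : ℕ) := card_fin_lt _ (le_of_lt i.isLt)

private lemma lt_cnt {A : Fin k → Finset (Fin m)} (hA : Monotone A) {x : Fin m} {i : Fin k}
    (hx : x ∉ A i) : (i : ℕ) < cnt A x := by
  have hsub : (Finset.univ.filter (fun j : Fin k => (j : ℕ) < (i : ℕ) + 1))
      ⊆ (Finset.univ.filter (fun j => x ∉ A j)) := by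
    intro j hj
    simp only [Finset.mem_filter, Finset.mem_univ, true_and] at hj ⊢
    intro hxj
    exact hx (hA (Fin.le_def.mpr (by omega)) hxj)
  have h := Finset.card_le_card hsub
  rw [card_fin_lt _ i.isLt] at h
  unfold cnt
  omega

private lemma mem_iff_cnt_le {A : Fin k → Finset (Fin m)} (hA : Monotone A) (x : Fin m)
    (i : Fin k) : x ∈ A i ↔ cnt A x ≤ (i : ℕ) := by
  constructor
  · exact cnt_le hA
  · intro h
    by_contra hx
    exact absurd h (not_le.mpr (lt_cnt hA hx))

/-- The chain associated to a function `f : Fin m → Fin (k+1)`. -/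
private def toChain (f : Fin m → Fin (k + 1)) : Fin k → Finset (Fin m) :=
  fun i => Finset.univ.filter (fun x => (f x : ℕ) ≤ (i : ℕ))

private lemma mem_toChain (f : Fin m → Fin (k + 1)) (x : Fin m) (i : Fin k) :
    x ∈ toChain f i ↔ (f x : ℕ) ≤ (i : ℕ) := by
  simp [toChain]

private lemma toChain_mono (f : Fin m → Fin (k + 1)) : Monotone (toChain f) := by
  intro i j hij x hx
  rw [mem_toChain] at hx ⊢
  exact le_trans hx (Fin.le_def.mp hij)

theorem chains_first_nonempty_last_proper (m k : ℕ) (hm : 1 ≤ m) (hk : 1 ≤ k) :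
    Nat.card {A : Fin k → Finset (Fin m) //
        StrictMono A ∧ A ⟨0, hk⟩ ≠ ∅ ∧ A ⟨k - 1, by omega⟩ ≠ Finset.univ}
      = Surj m (k + 1) := by
  rw [Surj]
  refine Nat.card_congr ?_
  refine
    { toFun := fun A => ⟨fun x => ⟨cnt A.1 x, Nat.lt_succ_of_le (cnt_le_k A.1 x)⟩, ?_⟩
      invFun := fun f => ⟨toChain f.1, ?_, ?_, ?_⟩
      left_inv := ?_
      right_inv := ?_ }
  · -- surjectivity
    obtain ⟨A, hSM, h0, hlast⟩ := A
    have hM : Monotone A := hSM.monotone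
    intro c
    rcases Nat.eq_zero_or_pos (c : ℕ) with hc0 | hcpos
    · obtain ⟨x, hx⟩ := Finset.nonempty_iff_ne_empty.mpr h0
      refine ⟨x, ?_⟩
      have h1 := cnt_le hM hx
      have h1' : cnt A x ≤ 0 := h1
      exact Fin.ext (show cnt A x = (c : ℕ) by omega)
    · rcases eq_or_lt_of_le (Nat.le_of_lt_succ c.isLt) with hck | hck
      · -- c = k : take x outside A (k-1)
        have hne : A ⟨k - 1, by omega⟩ ≠ Finset.univ := hlast
        obtain ⟨x, hx⟩ : ∃ x, x ∉ A ⟨k - 1, by omega⟩ := by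
          by_contra h
          push_neg at h
          exact hne (Finset.eq_univ_iff_forall.mpr h)
        refine ⟨x, ?_⟩
        have h1 := lt_cnt hM hx
        have h2 := cnt_le_k A x
        have h3 : k - 1 < cnt A x := h1
        exact Fin.ext (show cnt A x = (c : ℕ) by omega)
      · -- 1 ≤ c ≤ k-1 : take x ∈ A c \ A (c-1)
        have hlt : ((⟨(c : ℕ) - 1, by omega⟩ : Fin k) < ⟨(c : ℕ), hck⟩) := by
          rw [Fin.lt_def]; show (c : ℕ) - 1 < (c : ℕ); omega
        have hss := hSM hlt
        obtain ⟨x, hxc, hxc'⟩ := Finset.exists_of_ssubset hss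
        refine ⟨x, ?_⟩
        have h1 : cnt A x ≤ (c : ℕ) := cnt_le hM hxc
        have h2 : (c : ℕ) - 1 < cnt A x := lt_cnt hM hxc'
        exact Fin.ext (show cnt A x = (c : ℕ) by omega)
  · -- StrictMono of toChain
    obtain ⟨f, hf⟩ := f
    intro i j hij
    rw [lt_iff_le_and_ne]
    refine ⟨toChain_mono f (le_of_lt hij), ?_⟩
    obtain ⟨x, hx⟩ := hf ⟨(j : ℕ), by omega⟩
    intro heq
    have hxj : x ∈ toChain f j := by rw [mem_toChain, hx]
    have hxi : x ∉ toChain f i := by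
      rw [mem_toChain, hx]
      simp only [not_le]
      exact Fin.lt_def.mp hij
    rw [heq] at hxi
    exact hxi hxj
  · -- A 0 ≠ ∅
    obtain ⟨f, hf⟩ := f
    obtain ⟨x, hx⟩ := hf ⟨0, by omega⟩
    intro h
    have : x ∈ toChain f ⟨0, hk⟩ := by rw [mem_toChain, hx]
    rw [h] at this
    exact absurd this (Finset.notMem_empty x)
  · -- A (k-1) ≠ univ
    obtain ⟨f, hf⟩ := f
    obtain ⟨x, hx⟩ := hf ⟨k, by omega⟩
    intro h
    have : x ∈ toChain f ⟨k - 1, by omega⟩ := h ▸ Finset.mem_univ x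
    rw [mem_toChain, hx] at this
    have h2 : k ≤ k - 1 := this
    omega
  · -- left_inv : chain → fn → chain
    rintro ⟨A, hSM, h0, hlast⟩
    have hM : Monotone A := hSM.monotone
    ext i x
    rw [mem_toChain]
    simp only
    exact (mem_iff_cnt_le hM x i).symm
  · -- right_inv : fn → chain → fn
    rintro ⟨f, hf⟩
    ext x
    simp only
    have : cnt (toChain f) x = (f x : ℕ) := by
      have hset : (Finset.univ.filter (fun i : Fin k => x ∉ toChain f i))
          = Finset.univ.filter (fun i : Fin k => (i : ℕ) < (f x : ℕ)) := by
        ext i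
        simp [mem_toChain]
      rw [cnt, hset, card_fin_lt _ (Nat.le_of_lt_succ (f x).isLt)]
    exact this
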